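/- arXiv:1611.03553 — 2 statements merged into one kernel-verified Lean document; each statement's English description precedes it below -/
import Mathlib

section
/- Let S be a decomposable sum-product expression over the semiring ℝ≥0 whose scope is all of ι, let E ⊆ ι be a set of evidence variables and e an assignment to E. Define Z_e(S) ∈ ℝ≥0 recursively: Z_e of a constant leaf c is c; Z_e of a leaf (i, φ) is φ (e i) if i ∈ E and ∑_{t ∈ X i} φ t otherwise; Z_e of a Product node is the product of the Z_e-values of its children; Z_e of a Sum node v with children G₁, …, G_m is ∑_k (∏_{i ∈ (scope(v) \ scope(G_k)) \ E} |X i|) • Z_e(G_k). Then ∑_{z : ∀ i ∈ ι \ E, X i} eval S (e combined with z) = Z_e(S), where (e combined with z) is the full assignment agreeing with e on E and with z on ι \ E. -/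
open Finset

/-- A sum-product expression (SPF) over a commutative semiring `R` in variables
indexed by `ι` with domains `X i`. -/
inductive SPF (R : Type) (ι : Type) (X : ι → Type) where
  | const : R → SPF R ι X
  | leaf : (i : ι) → (X i → R) → SPF R ι X
  | sum : List (SPF R ι X) → SPF R ι X
  | prod : List (SPF R ι X) → SPF R ι X

namespace SPF

variable {R : Type} [CommSemiring R] {ι : Type} [DecidableEq ι] {X : ι → Type}

/-- Evaluation of an SPF at a full assignment. -/
def eval : SPF R ι X → ((i : ι) → X i) → R
  | .const c, _ => c
  | .leaf i φ, x => φ (x i)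
  | .sum l, x => (l.attach.map fun c => c.1.eval x).sum
  | .prod l, x => (l.attach.map fun c => c.1.eval x).prod
decreasing_by all_goals (simp_wf; have := List.sizeOf_lt_of_mem c.2; omega)

/-- The scope of an SPF: the set of variable indices appearing in its leaves. -/
def scope : SPF R ι X → Finset ι
  | .const _ => ∅
  | .leaf i _ => {i}
  | .sum l => (l.attach.map fun c => c.1.scope).foldr (· ∪ ·) ∅
  | .prod l => (l.attach.map fun c => c.1.scope).foldr (· ∪ ·) ∅
decreasing_by all_goals (simp_wf; have := List.sizeOf_lt_of_mem c.2; omega)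

/-- An SPF is decomposable iff the children of every Product node have
pairwise disjoint scopes. -/
inductive Decomposable : SPF R ι X → Prop
  | const (c : R) : Decomposable (.const c)
  | leaf (i : ι) (φ : X i → R) : Decomposable (.leaf i φ)
  | sum {l : List (SPF R ι X)} :
      (∀ G ∈ l, Decomposable G) → Decomposable (.sum l)
  | prod {l : List (SPF R ι X)} :
      (∀ G ∈ l, Decomposable G) →
      l.Pairwise (fun G H => Disjoint G.scope H.scope) →
      Decomposable (.prod l)

/-- The bottom-up pass `Z_e` for computing the (unnormalized) probability of
evidence `e` on the evidence variables `E` in an SPN: leaves on evidence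
variables are fixed to their evidence values, all other leaves are summed out,
Product nodes multiply, and Sum nodes add their children's values scaled by the
cardinality of the domains of the missing non-evidence variables. -/
def Ze [∀ i, Fintype (X i)] (E : Finset ι) (e : (i : ↥E) → X i.1) :
    SPF R ι X → R
  | .const c => c
  | .leaf i φ => if h : i ∈ E then φ (e ⟨i, h⟩) else ∑ t, φ t
  | .prod l => (l.attach.map fun c => c.1.Ze E e).prod
  | .sum l => (l.attach.map fun c =>
      (∏ i ∈ ((SPF.sum l).scope \ c.1.scope) \ E, Fintype.card (X i)) •
        c.1.Ze E e).sum
decreasing_by all_goals (simp_wf; have := List.sizeOf_lt_of_mem c.2; omega)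

end SPF

/-- The full assignment agreeing with the evidence `e` on `E` and with `z` on
the complement of `E`. -/
def combineEvidence {ι : Type} [Fintype ι] [DecidableEq ι] {X : ι → Type}
    (E : Finset ι) (e : (i : ↥E) → X i.1) (z : (i : ↥(Eᶜ)) → X i.1) :
    (i : ι) → X i := fun i =>
  if h : i ∈ E then e ⟨i, h⟩ else z ⟨i, Finset.mem_compl.mpr h⟩

-- ===== auxiliary SPF lemmas =====
namespace SPF

variable {R : Type} [CommSemiring R] {ι : Type} [DecidableEq ι] {X : ι → Type}

lemma eval_sum_eq (l : List (SPF R ι X)) (x : (i : ι) → X i) :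
    (SPF.sum l).eval x = (l.map (fun G => G.eval x)).sum := by
  rw [eval]; congr 1; simp

lemma eval_prod_eq (l : List (SPF R ι X)) (x : (i : ι) → X i) :
    (SPF.prod l).eval x = (l.map (fun G => G.eval x)).prod := by
  rw [eval]; congr 1; simp

lemma scope_sum_eq (l : List (SPF R ι X)) :
    (SPF.sum l).scope = (l.map scope).foldr (· ∪ ·) ∅ := by
  rw [scope]; congr 1; simp

lemma scope_prod_eq (l : List (SPF R ι X)) :
    (SPF.prod l).scope = (l.map scope).foldr (· ∪ ·) ∅ := by
  rw [scope]; congr 1; simp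

lemma Ze_prod_eq [∀ i, Fintype (X i)] (E : Finset ι) (e : (i : ↥E) → X i.1)
    (l : List (SPF R ι X)) :
    (SPF.prod l).Ze E e = (l.map (fun G => G.Ze E e)).prod := by
  rw [Ze]; congr 1; simp

lemma Ze_sum_eq [∀ i, Fintype (X i)] (E : Finset ι) (e : (i : ↥E) → X i.1)
    (l : List (SPF R ι X)) :
    (SPF.sum l).Ze E e = (l.map (fun G =>
      (∏ i ∈ ((SPF.sum l).scope \ G.scope) \ E, Fintype.card (X i)) • G.Ze E e)).sum := by
  rw [Ze]; congr 1; simp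

lemma mem_scope_sum {l : List (SPF R ι X)} {j : ι} :
    j ∈ (SPF.sum l).scope ↔ ∃ G ∈ l, j ∈ G.scope := by
  rw [scope_sum_eq]
  induction l with
  | nil => simp
  | cons G r ih => simp [ih]

lemma mem_scope_prod {l : List (SPF R ι X)} {j : ι} :
    j ∈ (SPF.prod l).scope ↔ ∃ G ∈ l, j ∈ G.scope := by
  rw [scope_prod_eq]
  induction l with
  | nil => simp
  | cons G r ih => simp [ih]

lemma scope_prod_cons (G : SPF R ι X) (r : List (SPF R ι X)) :
    (SPF.prod (G :: r)).scope = G.scope ∪ (SPF.prod r).scope := by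
  rw [scope_prod_eq, scope_prod_eq, List.map_cons, List.foldr_cons]

lemma eval_prod_cons (G : SPF R ι X) (r : List (SPF R ι X)) (x : (i : ι) → X i) :
    (SPF.prod (G :: r)).eval x = G.eval x * (SPF.prod r).eval x := by
  rw [eval_prod_eq, eval_prod_eq, List.map_cons, List.prod_cons]

lemma Ze_prod_cons [∀ i, Fintype (X i)] (E : Finset ι) (e : (i : ↥E) → X i.1)
    (G : SPF R ι X) (r : List (SPF R ι X)) :
    (SPF.prod (G :: r)).Ze E e = G.Ze E e * (SPF.prod r).Ze E e := by
  rw [Ze_prod_eq, Ze_prod_eq, List.map_cons, List.prod_cons]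

theorem eval_congr : ∀ (G : SPF R ι X) (x y : (i : ι) → X i),
    (∀ i ∈ G.scope, x i = y i) → G.eval x = G.eval y
  | .const c, x, y, h => by rw [eval, eval]
  | .leaf i φ, x, y, h => by
      rw [eval, eval, h i (by rw [scope]; exact Finset.mem_singleton_self i)]
  | .sum l, x, y, h => by
      rw [eval_sum_eq, eval_sum_eq]
      congr 1
      refine List.map_congr_left fun G hG => eval_congr G x y fun i hi =>
        h i (mem_scope_sum.mpr ⟨G, hG, hi⟩)
  | .prod l, x, y, h => by
      rw [eval_prod_eq, eval_prod_eq]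
      congr 1
      refine List.map_congr_left fun G hG => eval_congr G x y fun i hi =>
        h i (mem_scope_prod.mpr ⟨G, hG, hi⟩)
termination_by G => sizeOf G
decreasing_by all_goals (have := List.sizeOf_lt_of_mem hG; simp; omega)

end SPF

-- ===== pi-splitting machinery =====
namespace SPNaux

variable {ι : Type} [DecidableEq ι] {X : ι → Type} [∀ i, Fintype (X i)] [∀ i, Nonempty (X i)]

def piUnionEquiv (A B : Finset ι) (h : Disjoint A B) :
    ((i : ↥(A ∪ B)) → X i.1) ≃ ((i : ↥A) → X i.1) × ((i : ↥B) → X i.1) where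
  toFun z := (fun i => z ⟨i.1, Finset.mem_union_left _ i.2⟩,
              fun i => z ⟨i.1, Finset.mem_union_right _ i.2⟩)
  invFun p := fun i => if h' : i.1 ∈ A then p.1 ⟨i.1, h'⟩
    else p.2 ⟨i.1, (Finset.mem_union.mp i.2).resolve_left h'⟩
  left_inv z := by
    funext i
    by_cases h' : i.1 ∈ A <;> simp [h']
  right_inv p := by
    refine Prod.ext (funext fun i => ?_) (funext fun i => ?_)
    · simp [i.2]
    · have : i.1 ∉ A := Finset.disjoint_right.mp h i.2
      simp [this]

noncomputable def extA (E : Finset ι) (e : (i : ↥E) → X i.1) (T : Finset ι)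
    (z : (i : ↥T) → X i.1) : (i : ι) → X i := fun i =>
  if h : i ∈ E then e ⟨i, h⟩
  else if h' : i ∈ T then z ⟨i, h'⟩ else Classical.arbitrary _

variable (E : Finset ι) (e : (i : ↥E) → X i.1)

omit [∀ i, Nonempty (X i)] in
lemma sum_const_pi (T : Finset ι) (c : NNReal) :
    ∑ _z : (i : ↥T) → X i.1, c = (∏ i ∈ T, Fintype.card (X i)) • c := by
  rw [Finset.sum_const, Finset.card_univ, Fintype.card_pi]
  congr 1
  exact Finset.prod_coe_sort T (fun i => Fintype.card (X i))

lemma split (A B T : Finset ι) (hT : T = A ∪ B) (hAB : Disjoint A B)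
    (f g : ((i : ι) → X i) → NNReal)
    (hf : ∀ x y, (∀ i ∈ E ∪ A, x i = y i) → f x = f y)
    (hg : ∀ x y, (∀ i ∈ E ∪ B, x i = y i) → g x = g y) :
    ∑ z : (i : ↥T) → X i.1, f (extA E e T z) * g (extA E e T z)
    = (∑ a : (i : ↥A) → X i.1, f (extA E e A a)) *
      (∑ b : (i : ↥B) → X i.1, g (extA E e B b)) := by
  subst hT
  rw [Finset.sum_mul_sum, ← Fintype.sum_prod_type
    (fun p : ((i : ↥A) → X i.1) × ((i : ↥B) → X i.1) => f (extA E e A p.1) * g (extA E e B p.2))]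
  refine Fintype.sum_equiv (piUnionEquiv A B hAB) _ _ fun z => ?_
  have h1 : f (extA E e (A ∪ B) z) = f (extA E e A ((piUnionEquiv A B hAB) z).1) := by
    refine hf _ _ fun i hi => ?_
    rcases Finset.mem_union.mp hi with h | h
    · simp [extA, h]
    · by_cases hE : i ∈ E
      · simp [extA, hE]
      · simp [extA, hE, h, Finset.mem_union_left B h, piUnionEquiv]
  have h2 : g (extA E e (A ∪ B) z) = g (extA E e B ((piUnionEquiv A B hAB) z).2) := by
    refine hg _ _ fun i hi => ?_
    rcases Finset.mem_union.mp hi with h | h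
    · simp [extA, h]
    · by_cases hE : i ∈ E
      · simp [extA, hE]
      · simp [extA, hE, h, Finset.mem_union_right A h, piUnionEquiv]
  rw [h1, h2]

lemma sum_coord (T : Finset ι) (i : ι) (hi : i ∈ T) (hiE : i ∉ E) (φ : X i → NNReal) :
    ∑ z : (j : ↥T) → X j.1, φ (extA E e T z i)
    = (∏ j ∈ T \ {i}, Fintype.card (X j)) • ∑ t, φ t := by
  have hsplit := split E e {i} (T.erase i) T
    (by rw [← Finset.insert_eq]; exact (Finset.insert_erase hi).symm)
    (Finset.disjoint_singleton_left.mpr (Finset.notMem_erase i T))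
    (fun x => φ (x i)) (fun _ => 1)
    (fun x y h => by
      show φ (x i) = φ (y i)
      rw [h i (Finset.mem_union_right _ (Finset.mem_singleton_self i))])
    (fun _ _ _ => rfl)
  simp only [mul_one] at hsplit
  rw [hsplit]
  letI : Unique (↥({i} : Finset ι)) :=
    ⟨⟨⟨i, Finset.mem_singleton_self i⟩⟩, fun j => Subtype.ext (Finset.mem_singleton.mp j.2)⟩
  have h1 : (∑ a : (j : ↥({i} : Finset ι)) → X j.1, φ (extA E e {i} a i)) = ∑ t, φ t := by
    refine Fintype.sum_equiv (Equiv.piUnique (fun j : ↥({i} : Finset ι) => X j.1)) _ _ fun a => ?_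
    have : extA E e {i} a i = a ⟨i, Finset.mem_singleton_self i⟩ := by
      simp [extA, hiE, Finset.mem_singleton_self]
    rw [this]
    rfl
  rw [h1, sum_const_pi, Finset.sdiff_singleton_eq_erase]
  simp only [nsmul_eq_mul, mul_one]
  ring

omit [∀ i, Nonempty (X i)] in
lemma list_sum_swap {α β : Type*} (s : Finset α) (l : List β) (f : β → α → NNReal) :
    ∑ a ∈ s, (l.map (fun b => f b a)).sum = (l.map (fun b => ∑ a ∈ s, f b a)).sum := by
  induction l with
  | nil => simp
  | cons b l ih => simp [Finset.sum_add_distrib, ih]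

omit [∀ i, Fintype (X i)] [∀ i, Nonempty (X i)] in
lemma coeff (T s sG : Finset ι) (hsub : sG ⊆ s) (hsT : s ⊆ E ∪ T) (hd : Disjoint E T)
    (F : ι → ℕ) :
    (∏ i ∈ T \ sG, F i) = (∏ i ∈ T \ s, F i) * (∏ i ∈ (s \ sG) \ E, F i) := by
  rw [← Finset.prod_union (by
    rw [Finset.disjoint_left]
    intro a ha hb
    simp only [Finset.mem_sdiff] at ha hb
    exact ha.2 hb.1.1)]
  congr 1
  ext j
  simp only [Finset.mem_sdiff, Finset.mem_union]
  constructor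
  · rintro ⟨hjT, hjsG⟩
    by_cases hjs : j ∈ s
    · exact Or.inr ⟨⟨hjs, hjsG⟩, Finset.disjoint_right.mp hd hjT⟩
    · exact Or.inl ⟨hjT, hjs⟩
  · rintro (⟨hjT, hjs⟩ | ⟨⟨hjs, hjsG⟩, hjE⟩)
    · exact ⟨hjT, fun c => hjs (hsub c)⟩
    · rcases Finset.mem_union.mp (hsT hjs) with h | h
      · exact absurd h hjE
      · exact ⟨h, hjsG⟩

end SPNaux

open SPNaux in
theorem spn_main {ι : Type} [DecidableEq ι] {X : ι → Type}
    [∀ i, Fintype (X i)] [∀ i, Nonempty (X i)]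
    (E : Finset ι) (e : (i : ↥E) → X i.1) :
    ∀ (G : SPF NNReal ι X), G.Decomposable → ∀ (T : Finset ι), Disjoint E T →
      G.scope ⊆ E ∪ T →
      ∑ z : (i : ↥T) → X i.1, G.eval (extA E e T z)
        = (∏ i ∈ T \ G.scope, Fintype.card (X i)) • G.Ze E e
  | .const c, _, T, hd, _ => by
      simp only [SPF.eval, SPF.Ze, SPF.scope, Finset.sdiff_empty]
      exact sum_const_pi T c
  | .leaf i φ, _, T, hd, hsc => by
      simp only [SPF.eval, SPF.Ze, SPF.scope]
      by_cases h : i ∈ E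
      · have hiT : i ∉ T := Finset.disjoint_left.mp hd h
        have : ∀ z : (j : ↥T) → X j.1, extA E e T z i = e ⟨i, h⟩ := fun z => by
          simp [extA, h]
        simp only [this, dif_pos h]
        rw [sum_const_pi]
        congr 2
        rw [Finset.sdiff_eq_self_iff_disjoint.mpr]
        simp [Finset.subset_iff, hiT]
      · have hiT : i ∈ T := by
          have := hsc (by rw [SPF.scope]; exact Finset.mem_singleton_self i)
          rcases Finset.mem_union.mp this with h' | h'
          · exact absurd h' h
          · exact h'
        rw [sum_coord E e T i hiT h φ, dif_neg h]
  | .sum l, hdec, T, hd, hsc => by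
      have hdec' : ∀ G ∈ l, SPF.Decomposable G := by cases hdec with | sum h => exact h
      simp only [SPF.eval_sum_eq]
      rw [list_sum_swap]
      rw [List.map_congr_left (fun G hG => spn_main E e G (hdec' G hG) T hd
        (fun i hi => hsc (SPF.mem_scope_sum.mpr ⟨G, hG, hi⟩)))]
      rw [SPF.Ze_sum_eq, List.smul_sum, List.map_map]
      refine congrArg List.sum (List.map_congr_left fun G hG => ?_)
      show _ = (∏ i ∈ T \ (SPF.sum l).scope, Fintype.card (X i)) •
        ((∏ i ∈ ((SPF.sum l).scope \ G.scope) \ E, Fintype.card (X i)) • G.Ze E e)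
      rw [smul_smul]
      congr 1
      exact coeff E T (SPF.sum l).scope G.scope
        (fun j hj => SPF.mem_scope_sum.mpr ⟨G, hG, hj⟩) hsc hd _
  | .prod [], _, T, hd, _ => by
      simp only [SPF.eval_prod_eq, SPF.Ze_prod_eq, SPF.scope_prod_eq,
        List.map_nil, List.prod_nil, List.foldr_nil, Finset.sdiff_empty]
      exact sum_const_pi T 1
  | .prod (G₁ :: r), hdec, T, hd, hsc => by
      have hdec₁ : G₁.Decomposable := by
        cases hdec with | prod h _ => exact h G₁ List.mem_cons_self
      have hdecr : (SPF.prod r).Decomposable := by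
        cases hdec with | prod h hp =>
          exact SPF.Decomposable.prod (fun G hG => h G (List.mem_cons_of_mem _ hG)) hp.of_cons
      have hdisj : Disjoint G₁.scope (SPF.prod r).scope := by
        cases hdec with | prod h hp =>
          rw [Finset.disjoint_left]
          intro a ha hb
          rcases SPF.mem_scope_prod.mp hb with ⟨G, hG, haG⟩
          exact Finset.disjoint_left.mp ((List.pairwise_cons.mp hp).1 G hG) ha haG
      set A := T ∩ G₁.scope with hA
      set B := T \ G₁.scope with hB
      have hTeq : T = A ∪ B := by
        ext j; simp only [hA, hB, Finset.mem_union, Finset.mem_inter, Finset.mem_sdiff]; tauto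
      have hAB : Disjoint A B := by
        rw [Finset.disjoint_left]
        intro a ha hb
        exact (Finset.mem_sdiff.mp hb).2 (Finset.mem_inter.mp ha).2
      have hscc : G₁.scope ∪ (SPF.prod r).scope ⊆ E ∪ T := by
        rw [← SPF.scope_prod_cons]; exact hsc
      have hs₁A : G₁.scope ⊆ E ∪ A := by
        intro i hi
        rcases Finset.mem_union.mp (hscc (Finset.mem_union_left _ hi)) with h | h
        · exact Finset.mem_union_left _ h
        · exact Finset.mem_union_right _ (Finset.mem_inter.mpr ⟨h, hi⟩)
      have hsrB : (SPF.prod r).scope ⊆ E ∪ B := by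
        intro i hi
        rcases Finset.mem_union.mp (hscc (Finset.mem_union_right _ hi)) with h | h
        · exact Finset.mem_union_left _ h
        · exact Finset.mem_union_right _ (Finset.mem_sdiff.mpr
            ⟨h, fun c => Finset.disjoint_left.mp hdisj c hi⟩)
      have hsplit := split E e A B T hTeq hAB G₁.eval (SPF.prod r).eval
        (fun x y h => SPF.eval_congr G₁ x y (fun i hi => h i (hs₁A hi)))
        (fun x y h => SPF.eval_congr (SPF.prod r) x y (fun i hi => h i (hsrB hi)))
      simp only [SPF.eval_prod_cons]
      rw [hsplit]
      rw [spn_main E e G₁ hdec₁ A (Finset.disjoint_of_subset_right Finset.inter_subset_left hd)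
        hs₁A]
      rw [spn_main E e (SPF.prod r) hdecr B
        (Finset.disjoint_of_subset_right (Finset.sdiff_subset) hd) hsrB]
      have hAe : A \ G₁.scope = ∅ := by
        ext j
        simp only [hA, Finset.mem_sdiff, Finset.mem_inter, Finset.notMem_empty, iff_false]
        tauto
      have hBe : B \ (SPF.prod r).scope = T \ (SPF.prod (G₁ :: r)).scope := by
        rw [SPF.scope_prod_cons]
        ext j
        simp only [hB, Finset.mem_sdiff, Finset.mem_union]
        tauto
      rw [hAe, hBe, Finset.prod_empty, one_smul, SPF.Ze_prod_cons, mul_smul_comm]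
termination_by G => sizeOf G
decreasing_by
  all_goals first
    | (have := List.sizeOf_lt_of_mem hG; simp; omega)
    | (simp; omega)
    | simp
    | omega


/-- Corollary 5: the (unnormalized) probability of evidence in a decomposable
sum-product network (an SPF over the semiring `(ℝ≥0, +, ×, 0, 1)`) with full
scope is computed by the linear-time bottom-up pass `Z_e`. -/
theorem probability_of_evidence_decomposable_spn
    {ι : Type} [Fintype ι] [DecidableEq ι] {X : ι → Type}
    [∀ i, Fintype (X i)] [∀ i, Nonempty (X i)]
    (S : SPF NNReal ι X) (hdec : S.Decomposable) (hscope : S.scope = Finset.univ)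
    (E : Finset ι) (e : (i : ↥E) → X i.1) :
    ∑ z : (i : ↥(Eᶜ)) → X i.1, S.eval (combineEvidence E e z) = S.Ze E e := by
  have h := spn_main E e S hdec Eᶜ (disjoint_compl_right)
    (by rw [hscope]; intro i _; by_cases h : i ∈ E
        · exact Finset.mem_union_left _ h
        · exact Finset.mem_union_right _ (Finset.mem_compl.mpr h))
  rw [hscope] at h
  have heq : ∀ z : (i : ↥(Eᶜ)) → X i.1, combineEvidence E e z = SPNaux.extA E e Eᶜ z := by
    intro z
    funext i
    by_cases h' : i ∈ E
    · simp [combineEvidence, SPNaux.extA, h']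
    · simp [combineEvidence, SPNaux.extA, h', Finset.mem_compl.mpr h']
  simp only [heq]
  rw [h]
  have h0 : Eᶜ \ (Finset.univ : Finset ι) = ∅ :=
    Finset.sdiff_eq_empty_iff_subset.mpr (Finset.subset_univ _)
  rw [h0]
  simp
end

section
/- Let F be a decomposable and deterministic NNF over n Boolean variables. Define c(F) ∈ ℕ recursively: c of a literal leaf is 1; c of an And node is the product of the c-values of its children; c of an Or node v with children G₁, …, G_m is ∑_k 2^{|scope(v) \ scope(G_k)|} * c(G_k). Then the number of satisfying assignments of F satisfies |{x : Fin n → Bool | eval F x = true}| = 2^{n − |scope(F)|} * c(F). -/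
/-- A negation normal form circuit (NNF) over `n` Boolean variables. -/
inductive NNF (n : ℕ) where
  | lit : Fin n → Bool → NNF n
  | and : List (NNF n) → NNF n
  | or : List (NNF n) → NNF n

namespace NNF

variable {n : ℕ}

/-- Evaluation of an NNF at an assignment. -/
def eval : NNF n → (Fin n → Bool) → Bool
  | .lit i b, x => x i == b
  | .and l, x => l.attach.all fun c => c.1.eval x
  | .or l, x => l.attach.any fun c => c.1.eval x
decreasing_by all_goals (simp_wf; have := List.sizeOf_lt_of_mem c.2; omega)

/-- The scope of an NNF: the set of variable indices appearing in its literals. -/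
def scope : NNF n → Finset (Fin n)
  | .lit i _ => {i}
  | .and l => (l.attach.map fun c => c.1.scope).foldr (· ∪ ·) ∅
  | .or l => (l.attach.map fun c => c.1.scope).foldr (· ∪ ·) ∅
decreasing_by all_goals (simp_wf; have := List.sizeOf_lt_of_mem c.2; omega)

/-- An NNF is decomposable iff the children of every And node have pairwise
disjoint scopes. -/
inductive Decomposable : NNF n → Prop
  | lit (i : Fin n) (b : Bool) : Decomposable (.lit i b)
  | and {l : List (NNF n)} :
      (∀ G ∈ l, Decomposable G) →
      l.Pairwise (fun G H => Disjoint G.scope H.scope) →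
      Decomposable (.and l)
  | or {l : List (NNF n)} :
      (∀ G ∈ l, Decomposable G) → Decomposable (.or l)

/-- An NNF is deterministic iff the supports of the children of every Or node
are pairwise disjoint. -/
inductive Deterministic : NNF n → Prop
  | lit (i : Fin n) (b : Bool) : Deterministic (.lit i b)
  | and {l : List (NNF n)} :
      (∀ G ∈ l, Deterministic G) → Deterministic (.and l)
  | or {l : List (NNF n)} :
      (∀ G ∈ l, Deterministic G) →
      l.Pairwise (fun G H =>
        Disjoint {x : Fin n → Bool | G.eval x = true}
                 {x : Fin n → Bool | H.eval x = true}) →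
      Deterministic (.or l)

/-- The bottom-up model-counting pass `c` (summation in the counting semiring
`(ℕ, +, ×, 0, 1)`): `c` of a literal leaf is `1`, of an And node the product of
its children's values, and of an Or node the sum of its children's values, each
multiplied by `2` raised to the number of variables in the node's scope missing
from that child's scope. -/
def countZ : NNF n → ℕ
  | .lit _ _ => 1
  | .and l => (l.attach.map fun c => c.1.countZ).prod
  | .or l => (l.attach.map fun c =>
      2 ^ ((NNF.or l).scope \ c.1.scope).card * c.1.countZ).sum
decreasing_by all_goals (simp_wf; have := List.sizeOf_lt_of_mem c.2; omega)

end NNF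

namespace NNF

variable {n : ℕ}

theorem myInd {n : ℕ} {motive : NNF n → Prop}
    (hlit : ∀ i b, motive (.lit i b))
    (hand : ∀ l, (∀ G ∈ l, motive G) → motive (.and l))
    (hor : ∀ l, (∀ G ∈ l, motive G) → motive (.or l)) :
    ∀ F : NNF n, motive F
  | .lit i b => hlit i b
  | .and l => hand l (fun G hG => myInd hlit hand hor G)
  | .or l => hor l (fun G hG => myInd hlit hand hor G)
termination_by F => sizeOf F
decreasing_by all_goals (simp_wf; have := List.sizeOf_lt_of_mem hG; omega)

lemma all_congr' {α} (l : List α) (f g : α → Bool) (h : ∀ a ∈ l, f a = g a) :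
    l.all f = l.all g := by
  induction l with
  | nil => rfl
  | cons a l ih => simp_all [List.all_cons]

lemma eval_and (l : List (NNF n)) (x : Fin n → Bool) :
    (NNF.and l).eval x = l.all (·.eval x) := by
  rw [eval, Bool.eq_iff_iff]; simp [List.all_eq_true]

lemma eval_or (l : List (NNF n)) (x : Fin n → Bool) :
    (NNF.or l).eval x = l.any (·.eval x) := by
  rw [eval, Bool.eq_iff_iff]; simp [List.any_eq_true]

lemma scope_and (l : List (NNF n)) :
    (NNF.and l).scope = (l.map scope).foldr (· ∪ ·) ∅ := by
  rw [scope]; congr 1; simp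

lemma scope_or (l : List (NNF n)) :
    (NNF.or l).scope = (l.map scope).foldr (· ∪ ·) ∅ := by
  rw [scope]; congr 1; simp

lemma mem_foldr_union {α} [DecidableEq α] (L : List (Finset α)) (x : α) :
    x ∈ L.foldr (· ∪ ·) ∅ ↔ ∃ s ∈ L, x ∈ s := by
  induction L with
  | nil => simp
  | cons s L ih => simp [ih]

lemma mem_scope_and {l : List (NNF n)} {i : Fin n} :
    i ∈ (NNF.and l).scope ↔ ∃ G ∈ l, i ∈ G.scope := by
  rw [scope_and, mem_foldr_union]; simp

lemma mem_scope_or {l : List (NNF n)} {i : Fin n} :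
    i ∈ (NNF.or l).scope ↔ ∃ G ∈ l, i ∈ G.scope := by
  rw [scope_or, mem_foldr_union]; simp

lemma scope_subset_or {l : List (NNF n)} {G : NNF n} (h : G ∈ l) :
    G.scope ⊆ (NNF.or l).scope := fun i hi => mem_scope_or.2 ⟨G, h, hi⟩

lemma eval_eq_of_agree (F : NNF n) : ∀ (x y : Fin n → Bool),
    (∀ i ∈ F.scope, x i = y i) → F.eval x = F.eval y := by
  induction F using myInd with
  | hlit i b =>
    intro x y h
    rw [eval, eval, h i (by rw [scope]; exact Finset.mem_singleton_self i)]
  | hand l ih =>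
    intro x y h
    rw [eval_and, eval_and]
    exact all_congr' l _ _ (fun G hG =>
      ih G hG x y (fun i hi => h i (mem_scope_and.2 ⟨G, hG, hi⟩)))
  | hor l ih =>
    intro x y h
    rw [eval_or, eval_or, Bool.eq_iff_iff]
    simp only [List.any_eq_true]
    constructor
    · rintro ⟨G, hG, hx⟩
      exact ⟨G, hG, by rw [← ih G hG x y (fun i hi => h i (mem_scope_or.2 ⟨G, hG, hi⟩))]; exact hx⟩
    · rintro ⟨G, hG, hx⟩
      exact ⟨G, hG, by rw [ih G hG x y (fun i hi => h i (mem_scope_or.2 ⟨G, hG, hi⟩))]; exact hx⟩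

def modelCount (F : NNF n) : ℕ :=
  (Finset.univ.filter fun x : Fin n → Bool => F.eval x = true).card

lemma card_univ_fun : (Finset.univ : Finset (Fin n → Bool)).card = 2 ^ n := by
  simp

lemma indep_card {s t : Finset (Fin n)} (hst : Disjoint s t)
    (f g : (Fin n → Bool) → Bool)
    (hf : ∀ x y, (∀ i ∈ s, x i = y i) → f x = f y)
    (hg : ∀ x y, (∀ i ∈ t, x i = y i) → g x = g y) :
    (Finset.univ.filter fun x => f x = true).card *
      (Finset.univ.filter fun x => g x = true).card =
    (Finset.univ.filter fun x => f x = true ∧ g x = true).card * 2 ^ n := by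
  classical
  set merge : (Fin n → Bool) → (Fin n → Bool) → (Fin n → Bool) :=
    fun y z i => if i ∈ s then y i else z i with hmerge
  have hmf : ∀ y z, f (merge y z) = f y := fun y z =>
    hf _ _ (fun i hi => by simp [hmerge, hi])
  have hmg : ∀ y z, g (merge y z) = g z := fun y z =>
    hg _ _ (fun i hi => by
      have : i ∉ s := Finset.disjoint_right.1 hst hi
      simp [hmerge, this])
  have hinv : ∀ y z, merge (merge y z) (merge z y) = y := by
    intro y z; funext i; by_cases hi : i ∈ s <;> simp [hmerge, hi]
  rw [← Finset.card_product, ← card_univ_fun, ← Finset.card_product]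
  apply Finset.card_bij' (fun p _ => (merge p.1 p.2, merge p.2 p.1))
    (fun q _ => (merge q.1 q.2, merge q.2 q.1))
  · rintro ⟨y, z⟩ hp
    simp only [Finset.mem_product, Finset.mem_filter, Finset.mem_univ, true_and] at hp ⊢
    exact ⟨⟨by rw [hmf]; exact hp.1, by rw [hmg]; exact hp.2⟩, trivial⟩
  · rintro ⟨u, v⟩ hq
    simp only [Finset.mem_product, Finset.mem_filter, Finset.mem_univ, true_and] at hq ⊢
    exact ⟨by rw [hmf]; exact hq.1.1, by rw [hmg]; exact hq.1.2⟩
  · rintro ⟨y, z⟩ _; simp only [Prod.mk.injEq]; exact ⟨hinv y z, hinv z y⟩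
  · rintro ⟨u, v⟩ _; simp only [Prod.mk.injEq]; exact ⟨hinv u v, hinv v u⟩

lemma count_lit (i : Fin n) (b : Bool) :
    (Finset.univ.filter fun x : Fin n → Bool => (x i == b) = true).card = 2 ^ (n - 1) := by
  classical
  have hflip : ∀ b : Bool,
      (Finset.univ.filter fun x : Fin n → Bool => (x i == b) = true).card =
      (Finset.univ.filter fun x : Fin n → Bool => (x i == !b) = true).card := by
    intro b
    apply Finset.card_bij' (fun x _ => Function.update x i (!(x i)))
      (fun x _ => Function.update x i (!(x i)))
    · intro x _
      funext j
      rcases eq_or_ne j i with rfl | h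
      · simp
      · simp [Function.update_apply, h]
    · intro x _
      funext j
      rcases eq_or_ne j i with rfl | h
      · simp
      · simp [Function.update_apply, h]
    · intro x hx
      simp only [Finset.mem_filter, Finset.mem_univ, true_and, beq_iff_eq] at hx ⊢
      simp [Function.update_self, hx]
    · intro x hx
      simp only [Finset.mem_filter, Finset.mem_univ, true_and, beq_iff_eq] at hx ⊢
      simp [Function.update_self, hx]
  have hsplit :
      (Finset.univ.filter fun x : Fin n → Bool => (x i == b) = true).card +
      (Finset.univ.filter fun x : Fin n → Bool => (x i == !b) = true).card = 2 ^ n := by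
    have hD : Disjoint (Finset.univ.filter fun x : Fin n → Bool => (x i == b) = true)
        (Finset.univ.filter fun x : Fin n → Bool => (x i == !b) = true) := by
      rw [Finset.disjoint_left]
      intro x hx hx'
      simp only [Finset.mem_filter, Finset.mem_univ, true_and, beq_iff_eq] at hx hx'
      rw [hx] at hx'
      cases b <;> simp at hx'
    have hU : (Finset.univ.filter fun x : Fin n → Bool => (x i == b) = true) ∪
        (Finset.univ.filter fun x : Fin n → Bool => (x i == !b) = true) = Finset.univ := by
      ext x
      simp only [Finset.mem_union, Finset.mem_filter, Finset.mem_univ, true_and,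
        beq_iff_eq, iff_true]
      rcases Bool.eq_false_or_eq_true (x i) with h | h <;> cases b <;> simp [h]
    rw [← Finset.card_union_of_disjoint hD, hU, card_univ_fun]
  have hn : 0 < n := i.pos
  have h2 : 2 * (Finset.univ.filter fun x : Fin n → Bool => (x i == b) = true).card = 2 ^ n := by
    rw [two_mul]; nth_rewrite 2 [hflip]; exact hsplit
  have hpow : 2 ^ n = 2 * 2 ^ (n - 1) := by
    conv_lhs => rw [← Nat.succ_pred_eq_of_pos hn]
    rw [pow_succ, Nat.pred_eq_sub_one, mul_comm]
  rw [hpow] at h2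
  exact Nat.eq_of_mul_eq_mul_left (by norm_num) h2

lemma count_or_sum : ∀ (l : List (NNF n)),
    l.Pairwise (fun G H =>
      Disjoint {x : Fin n → Bool | G.eval x = true} {x : Fin n → Bool | H.eval x = true}) →
    (Finset.univ.filter fun x : Fin n → Bool => (NNF.or l).eval x = true).card =
      (l.map modelCount).sum := by
  intro l hl
  induction l with
  | nil => simp [eval_or]
  | cons G l ih =>
    rw [List.pairwise_cons] at hl
    have hunion : (Finset.univ.filter fun x : Fin n → Bool => (NNF.or (G :: l)).eval x = true) =
        (Finset.univ.filter fun x => G.eval x = true) ∪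
        (Finset.univ.filter fun x => (NNF.or l).eval x = true) := by
      ext x
      simp [eval_or, List.any_cons]
    have hdisj : Disjoint (Finset.univ.filter fun x : Fin n → Bool => G.eval x = true)
        (Finset.univ.filter fun x => (NNF.or l).eval x = true) := by
      rw [Finset.disjoint_left]
      intro x hxG hxl
      simp only [Finset.mem_filter, Finset.mem_univ, true_and] at hxG hxl
      rw [eval_or, List.any_eq_true] at hxl
      obtain ⟨H, hH, hxH⟩ := hxl
      exact Set.disjoint_left.1 (hl.1 H hH) hxG hxH
    rw [hunion, Finset.card_union_of_disjoint hdisj, ih hl.2, List.map_cons, List.sum_cons]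
    rfl

lemma count_and : ∀ (l : List (NNF n)),
    (∀ G ∈ l, modelCount G = 2 ^ (n - G.scope.card) * G.countZ) →
    l.Pairwise (fun G H => Disjoint G.scope H.scope) →
    modelCount (NNF.and l) = 2 ^ (n - (NNF.and l).scope.card) * (l.map countZ).prod := by
  intro l
  induction l with
  | nil =>
    intro _ _
    simp [modelCount, eval_and, scope_and, card_univ_fun]
  | cons G l ih =>
    intro hIH hpw
    rw [List.pairwise_cons] at hpw
    have hGl : Disjoint G.scope (NNF.and l).scope := by
      rw [Finset.disjoint_right]
      intro i hi
      obtain ⟨H, hH, hiH⟩ := mem_scope_and.1 hi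
      exact fun hiG => Finset.disjoint_left.1 (hpw.1 H hH) hiG hiH
    have key := indep_card hGl G.eval (NNF.and l).eval
      (fun x y h => eval_eq_of_agree G x y h)
      (fun x y h => eval_eq_of_agree (NNF.and l) x y h)
    have hfe : (Finset.univ.filter fun x : Fin n → Bool =>
        G.eval x = true ∧ (NNF.and l).eval x = true) =
        (Finset.univ.filter fun x => (NNF.and (G :: l)).eval x = true) := by
      ext x
      simp [eval_and, List.all_cons]
    rw [hfe] at key
    have hscope : (NNF.and (G :: l)).scope = G.scope ∪ (NNF.and l).scope := by
      rw [scope_and, List.map_cons, List.foldr_cons, ← scope_and]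
    have hcard : (NNF.and (G :: l)).scope.card = G.scope.card + (NNF.and l).scope.card := by
      rw [hscope, Finset.card_union_of_disjoint hGl]
    have hle : (NNF.and (G :: l)).scope.card ≤ n := by
      calc (NNF.and (G :: l)).scope.card ≤ (Finset.univ : Finset (Fin n)).card :=
            Finset.card_le_univ _
        _ = n := by simp
    have ha : G.scope.card ≤ n := le_trans (by omega) hle
    have hb : (NNF.and l).scope.card ≤ n := le_trans (by omega) hle
    have e2 : modelCount G * modelCount (NNF.and l) =
        2 ^ (n - (NNF.and (G :: l)).scope.card) * ((G :: l).map countZ).prod * 2 ^ n := by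
      rw [hIH G List.mem_cons_self,
        ih (fun H hH => hIH H (List.mem_cons_of_mem G hH)) hpw.2,
        List.map_cons, List.prod_cons]
      have : 2 ^ (n - G.scope.card) * G.countZ *
          (2 ^ (n - (NNF.and l).scope.card) * (l.map countZ).prod) =
          2 ^ ((n - G.scope.card) + (n - (NNF.and l).scope.card)) *
            (G.countZ * (l.map countZ).prod) := by rw [pow_add]; ring
      rw [this]
      have hexp : (n - G.scope.card) + (n - (NNF.and l).scope.card) =
          (n - (NNF.and (G :: l)).scope.card) + n := by omega
      rw [hexp, pow_add]; ring
    have e1 : modelCount G * modelCount (NNF.and l) =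
        modelCount (NNF.and (G :: l)) * 2 ^ n := by
      rw [modelCount, modelCount, modelCount]; exact key
    rw [e1] at e2
    have h2n : (0:ℕ) < 2 ^ n := Nat.pow_pos (by norm_num)
    exact Nat.eq_of_mul_eq_mul_right h2n e2

end NNF

/-- Corollary 8: the model count of a deterministic, decomposable NNF is
computed by the linear-time bottom-up pass `c`, corrected by a factor of `2`
raised to the number of variables missing from the root's scope. -/
theorem model_count_deterministic_decomposable_nnf
    {n : ℕ} (F : NNF n) (hdec : F.Decomposable) (hdet : F.Deterministic) :
    (Finset.univ.filter fun x : Fin n → Bool => F.eval x = true).card =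
      2 ^ (n - F.scope.card) * F.countZ := by
  revert hdec hdet
  induction F using NNF.myInd with
  | hlit i b =>
    intro _ _
    rw [NNF.countZ, NNF.scope]
    have : (Finset.univ.filter fun x : Fin n → Bool => (NNF.lit i b).eval x = true) =
        (Finset.univ.filter fun x : Fin n → Bool => (x i == b) = true) := by
      ext x; simp [NNF.eval]
    rw [this, NNF.count_lit]
    simp
  | hand l ih =>
    intro hdec hdet
    cases hdec with
    | and hd hp =>
      cases hdet with
      | and hdt =>
        have := NNF.count_and l (fun G hG => ih G hG (hd G hG) (hdt G hG)) hp
        rw [NNF.modelCount] at this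
        rw [this]
        congr 1
        rw [NNF.countZ]
        congr 1
        simp
  | hor l ih =>
    intro hdec hdet
    cases hdec with
    | or hd =>
      cases hdet with
      | or hdt hp =>
        rw [NNF.count_or_sum l hp]
        have hterm : ∀ G ∈ l, NNF.modelCount G =
            2 ^ (n - (NNF.or l).scope.card) *
              (2 ^ (((NNF.or l).scope \ G.scope).card) * G.countZ) := by
          intro G hG
          rw [NNF.modelCount, ih G hG (hd G hG) (hdt G hG)]
          have hsub : G.scope ⊆ (NNF.or l).scope := NNF.scope_subset_or hG
          have h1 : ((NNF.or l).scope \ G.scope).card =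
              (NNF.or l).scope.card - G.scope.card := Finset.card_sdiff_of_subset hsub
          have h2 : G.scope.card ≤ (NNF.or l).scope.card := Finset.card_le_card hsub
          have h3 : (NNF.or l).scope.card ≤ n := by
            calc (NNF.or l).scope.card ≤ (Finset.univ : Finset (Fin n)).card :=
                  Finset.card_le_univ _
              _ = n := by simp
          rw [h1, ← mul_assoc, ← pow_add]
          congr 2
          omega
        rw [List.map_congr_left hterm, List.sum_map_mul_left]
        congr 1
        rw [NNF.countZ]
        congr 1
        simp
end
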